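/- Let q_1, q_2 be real numbers with 1 < q_1 < 2 < q_2 and q_1 q_2 ((q_2 − 2) + q_2(q_1 − 2)) > 1, and set a = q_1 − 2, s_2 = (q_2 − 2) + q_2(q_1 − 2), s_1 = a + min(0, q_1 s_2 − 1). Let φ_1^{(0)}, φ_2^{(0)} ∈ C² and φ_1^{(1)}, φ_2^{(1)} ∈ C¹ be radial functions on ℝ³ supported in {|x| < 1}, and let ψ_i : [0,∞) × [0,∞) → ℝ be C² solutions of the 1+1-dimensional wave equation ∂_t²ψ_i = ∂_r²ψ_i with ψ_i(t, 0) = 0, ψ_i(0, r) = r·φ_i^{(0)}(r) and ∂_tψ_i(0, r) = r·φ_i^{(1)}(r). Then ‖(ψ_1, ψ_2)‖_X ≤ C · ( ‖φ_1^{(0)}‖_{W^{2,∞}} + ‖φ_2^{(0)}‖_{W^{2,∞}} + ‖φ_1^{(1)}‖_{W^{1,∞}} + ‖φ_2^{(1)}‖_{W^{1,∞}} ) for a constant C depending only on q_1, q_2. -/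

import Mathlib

open Real Set MeasureTheory

noncomputable section

/-- Three-dimensional Euclidean space. -/
abbrev E3 : Type := EuclideanSpace ℝ (Fin 3)

/-- A function on `ℝ³` is radial (spherically symmetric) if it depends only on `|x|`. -/
def Radial (f : E3 → ℝ) : Prop := ∀ x y : E3, ‖x‖ = ‖y‖ → f x = f y

/-- Radial representative: value of `f` at the point at distance `r` on the first axis. -/
def radRep (f : E3 → ℝ) : ℝ → ℝ := fun r => f (r • EuclideanSpace.single (0 : Fin 3) (1 : ℝ))

/-- `W^{2,∞}` norm: sup of the function and of its first and second Fréchet derivatives. -/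
def W2inf (f : E3 → ℝ) : ℝ :=
  (⨆ x : E3, |f x|) + (⨆ x : E3, ‖fderiv ℝ f x‖) + (⨆ x : E3, ‖fderiv ℝ (fderiv ℝ f) x‖)

/-- `W^{1,∞}` norm: sup of the function and of its first Fréchet derivative. -/
def W1inf (f : E3 → ℝ) : ℝ :=
  (⨆ x : E3, |f x|) + (⨆ x : E3, ‖fderiv ℝ f x‖)

/-- Partial derivative in time of a function of `(t, r)`. -/
def pdt (ψ : ℝ → ℝ → ℝ) : ℝ → ℝ → ℝ := fun t r => deriv (fun s => ψ s r) t

/-- Partial derivative in the radial variable of a function of `(t, r)`. -/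
def pdr (ψ : ℝ → ℝ → ℝ) : ℝ → ℝ → ℝ := fun t r => deriv (fun ρ => ψ t ρ) r

/-- Outgoing null derivative `∂_v = ∂_t + ∂_r`. -/
def pdv (ψ : ℝ → ℝ → ℝ) : ℝ → ℝ → ℝ := fun t r => pdt ψ t r + pdr ψ t r

/-- Japanese bracket `⟨x⟩ = (1 + x²)^{1/2}`. -/
def jap (x : ℝ) : ℝ := Real.sqrt (1 + x ^ 2)

/-- The weighted sup-norm `X` for the Glassey–Strauss system. -/
def Xnorm (a s1 s2 : ℝ) (ψ1 ψ2 : ℝ → ℝ → ℝ) : ℝ :=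
  (⨆ p : {p : ℝ × ℝ // 0 ≤ p.1 ∧ 0 ≤ p.2},
      |pdt ψ1 p.1.1 p.1.2 / p.1.2| * jap ((p.1.1 + p.1.2) / 2) ^ (1 + a)
        * jap ((p.1.1 - p.1.2) / 2) ^ (s1 + 1 - a)) +
  (⨆ p : {p : ℝ × ℝ // 0 ≤ p.1 ∧ 0 ≤ p.2},
      |ψ2 p.1.1 p.1.2 / p.1.2| * jap ((p.1.1 + p.1.2) / 2)
        * jap ((p.1.1 - p.1.2) / 2) ^ s2) +
  (⨆ p : {p : ℝ × ℝ // 0 ≤ p.1 ∧ 0 ≤ p.2},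
      |pdv ψ2 p.1.1 p.1.2| * jap ((p.1.1 + p.1.2) / 2) ^ (s2 + 1))


/-- Mean value inequality on `[a,b]`. -/
lemma mvt_Icc {f f' : ℝ → ℝ} {a b C : ℝ} (hab : a ≤ b)
    (hf : ∀ s ∈ Icc a b, HasDerivAt f (f' s) s)
    (hb : ∀ s ∈ Icc a b, |f' s| ≤ C) : |f b - f a| ≤ C * (b - a) := by
  have := norm_image_sub_le_of_norm_deriv_le_segment'
    (f := f) (f' := f') (a := a) (b := b) (C := C)
    (fun x hx => (hf x hx).hasDerivWithinAt)
    (fun x hx => hb x (Ico_subset_Icc_self hx)) b (right_mem_Icc.2 hab)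
  simpa [Real.norm_eq_abs] using this

/-- Constancy from vanishing derivative on `[a,b]`. -/
lemma const_Icc {f f' : ℝ → ℝ} {a b : ℝ} (hab : a ≤ b)
    (hf : ∀ s ∈ Icc a b, HasDerivAt f (f' s) s)
    (hb : ∀ s ∈ Icc a b, f' s = 0) : f b = f a := by
  have h := mvt_Icc hab hf (C := 0) (fun s hs => by simp [hb s hs])
  have : |f b - f a| ≤ 0 := by linarith [h]
  have := abs_nonneg (f b - f a)
  have : |f b - f a| = 0 := le_antisymm ‹|f b - f a| ≤ 0› this
  linarith [abs_eq_zero.1 this, sub_eq_zero.1 (abs_eq_zero.1 this)]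

lemma jap_pos (x : ℝ) : 0 < jap x := by
  have : (0:ℝ) < 1 + x ^ 2 := by positivity
  exact Real.sqrt_pos.2 this

lemma one_le_jap (x : ℝ) : 1 ≤ jap x := by
  rw [jap]
  exact Real.one_le_sqrt.2 (by nlinarith [sq_nonneg x])

lemma jap_le_one_add_abs (x : ℝ) : jap x ≤ 1 + |x| := by
  rw [jap]
  have h : 1 + x ^ 2 ≤ (1 + |x|) ^ 2 := by nlinarith [abs_nonneg x, sq_abs x]
  calc Real.sqrt (1 + x ^ 2) ≤ Real.sqrt ((1 + |x|) ^ 2) := Real.sqrt_le_sqrt h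
    _ = 1 + |x| := Real.sqrt_sq (by positivity)

/-- If a continuous function vanishes for `1 < ‖x‖` then it vanishes for `1 ≤ ‖x‖`. -/
lemma ext_zero {Y : Type*} [NormedAddCommGroup Y] {G : E3 → Y} (hG : Continuous G)
    (h : ∀ x : E3, 1 < ‖x‖ → G x = 0) : ∀ x : E3, 1 ≤ ‖x‖ → G x = 0 := by
  intro x hx
  have h1 : Filter.Tendsto (fun c : ℝ => c • x) (nhdsWithin 1 (Ioi 1)) (nhds x) := by
    have : Filter.Tendsto (fun c : ℝ => c • x) (nhds 1) (nhds ((1:ℝ) • x)) :=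
      (continuous_id.smul continuous_const).tendsto 1
    simpa using this.mono_left nhdsWithin_le_nhds
  have h2 : Filter.Tendsto (fun c : ℝ => G (c • x)) (nhdsWithin 1 (Ioi 1)) (nhds (G x)) :=
    (hG.tendsto x).comp h1
  have h3 : Filter.Tendsto (fun c : ℝ => G (c • x)) (nhdsWithin 1 (Ioi 1)) (nhds 0) := by
    apply Filter.Tendsto.congr' _ tendsto_const_nhds
    filter_upwards [self_mem_nhdsWithin] with c (hc : 1 < c)
    have : 1 < ‖c • x‖ := by
      rw [norm_smul]
      have : (1:ℝ) * 1 ≤ c * ‖x‖ := by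
        apply mul_le_mul hc.le hx (by norm_num) (by linarith)
      simp only [Real.norm_eq_abs, abs_of_pos (by linarith : (0:ℝ) < c)]
      nlinarith
    exact (h _ this).symm
  exact tendsto_nhds_unique h2 h3

/-- Pointwise bound by the sup for continuous functions vanishing outside the unit ball. -/
lemma le_sup_of_cont {g : E3 → ℝ} (hg : Continuous g) (h0 : ∀ x : E3, 1 ≤ ‖x‖ → g x = 0)
    (hnn : ∀ x, 0 ≤ g x) : (∀ y, g y ≤ ⨆ x, g x) ∧ 0 ≤ ⨆ x : E3, g x := by
  obtain ⟨C, hC⟩ := (isCompact_closedBall (0:E3) 1).exists_bound_of_continuousOn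
    hg.continuousOn
  have hbd : ∀ x, g x ≤ max C 0 := by
    intro x
    rcases le_or_gt ‖x‖ 1 with h | h
    · exact le_max_of_le_left (le_trans (le_abs_self _)
        (by simpa [Real.norm_eq_abs] using hC x (by simpa [Metric.mem_closedBall, dist_eq_norm] using h)))
    · simp [h0 x h.le]
  have hB : BddAbove (Set.range g) := ⟨max C 0, by rintro _ ⟨x, rfl⟩; exact hbd x⟩
  exact ⟨fun y => le_ciSup hB y, Real.iSup_nonneg hnn⟩
section Wave

variable {ψ : ℝ → ℝ → ℝ} {F G : ℝ → ℝ}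

lemma line_deriv (hψ : ContDiff ℝ 2 (fun p : ℝ × ℝ => ψ p.1 p.2))
    {c : ℝ → ℝ × ℝ} {v : ℝ × ℝ} {s : ℝ} (hc : HasDerivAt c v s) :
    HasDerivAt (fun s => ψ (c s).1 (c s).2)
      (fderiv ℝ (fun p : ℝ × ℝ => ψ p.1 p.2) (c s) v) s :=
  ((hψ.differentiable two_ne_zero (c s)).hasFDerivAt).comp_hasDerivAt s hc

lemma line_deriv2 (hψ : ContDiff ℝ 2 (fun p : ℝ × ℝ => ψ p.1 p.2))
    {c : ℝ → ℝ × ℝ} {v : ℝ × ℝ} (w : ℝ × ℝ) {s : ℝ} (hc : HasDerivAt c v s) :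
    HasDerivAt (fun s => fderiv ℝ (fun p : ℝ × ℝ => ψ p.1 p.2) (c s) w)
      (fderiv ℝ (fderiv ℝ (fun p : ℝ × ℝ => ψ p.1 p.2)) (c s) v w) s := by
  have hd : Differentiable ℝ (fderiv ℝ (fun p : ℝ × ℝ => ψ p.1 p.2)) :=
    (hψ.fderiv_right (m := 1) (by norm_num)).differentiable one_ne_zero
  have h1 := ((hd (c s)).hasFDerivAt).comp_hasDerivAt s hc
  simpa using h1.clm_apply (hasDerivAt_const s w)

lemma hasDerivAt_slice_t (hψ : ContDiff ℝ 2 (fun p : ℝ × ℝ => ψ p.1 p.2)) (t r : ℝ) :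
    HasDerivAt (fun s => ψ s r) (fderiv ℝ (fun p : ℝ × ℝ => ψ p.1 p.2) (t, r) (1, 0)) t :=
  line_deriv hψ ((hasDerivAt_id t).prodMk (hasDerivAt_const t r))

lemma hasDerivAt_slice_r (hψ : ContDiff ℝ 2 (fun p : ℝ × ℝ => ψ p.1 p.2)) (t r : ℝ) :
    HasDerivAt (fun ρ => ψ t ρ) (fderiv ℝ (fun p : ℝ × ℝ => ψ p.1 p.2) (t, r) (0, 1)) r :=
  line_deriv hψ ((hasDerivAt_const r t).prodMk (hasDerivAt_id r))

lemma pdt_eq (hψ : ContDiff ℝ 2 (fun p : ℝ × ℝ => ψ p.1 p.2)) (t r : ℝ) :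
    pdt ψ t r = fderiv ℝ (fun p : ℝ × ℝ => ψ p.1 p.2) (t, r) (1, 0) :=
  (hasDerivAt_slice_t hψ t r).deriv

lemma pdr_eq (hψ : ContDiff ℝ 2 (fun p : ℝ × ℝ => ψ p.1 p.2)) (t r : ℝ) :
    pdr ψ t r = fderiv ℝ (fun p : ℝ × ℝ => ψ p.1 p.2) (t, r) (0, 1) :=
  (hasDerivAt_slice_r hψ t r).deriv

lemma pdv_eq (hψ : ContDiff ℝ 2 (fun p : ℝ × ℝ => ψ p.1 p.2)) (t r : ℝ) :
    pdv ψ t r = fderiv ℝ (fun p : ℝ × ℝ => ψ p.1 p.2) (t, r) (1, 1) := by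
  have e : ((1:ℝ), (1:ℝ)) = ((1:ℝ), (0:ℝ)) + ((0:ℝ), (1:ℝ)) := by simp
  rw [pdv, pdt_eq hψ, pdr_eq hψ, e, map_add]

lemma pdu_eq (hψ : ContDiff ℝ 2 (fun p : ℝ × ℝ => ψ p.1 p.2)) (t r : ℝ) :
    pdt ψ t r - pdr ψ t r = fderiv ℝ (fun p : ℝ × ℝ => ψ p.1 p.2) (t, r) (1, -1) := by
  have e : ((1:ℝ), (-1:ℝ)) = ((1:ℝ), (0:ℝ)) - ((0:ℝ), (1:ℝ)) := by simp
  rw [pdt_eq hψ, pdr_eq hψ, e, map_sub]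

lemma symmH (hψ : ContDiff ℝ 2 (fun p : ℝ × ℝ => ψ p.1 p.2)) (p v w : ℝ × ℝ) :
    fderiv ℝ (fderiv ℝ (fun p : ℝ × ℝ => ψ p.1 p.2)) p v w
      = fderiv ℝ (fderiv ℝ (fun p : ℝ × ℝ => ψ p.1 p.2)) p w v := by
  have hd : Differentiable ℝ (fderiv ℝ (fun p : ℝ × ℝ => ψ p.1 p.2)) :=
    (hψ.fderiv_right (m := 1) (by norm_num)).differentiable one_ne_zero
  exact second_derivative_symmetric
    (fun y => (hψ.differentiable two_ne_zero y).hasFDerivAt) ((hd p).hasFDerivAt) v w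

lemma pdtt_eq (hψ : ContDiff ℝ 2 (fun p : ℝ × ℝ => ψ p.1 p.2)) (t r : ℝ) :
    pdt (pdt ψ) t r
      = fderiv ℝ (fderiv ℝ (fun p : ℝ × ℝ => ψ p.1 p.2)) (t, r) (1, 0) (1, 0) := by
  have h : (fun s => pdt ψ s r)
      = fun s => fderiv ℝ (fun p : ℝ × ℝ => ψ p.1 p.2) (s, r) (1, 0) :=
    funext fun s => pdt_eq hψ s r
  show deriv (fun s => pdt ψ s r) t = _
  rw [h]
  exact (line_deriv2 hψ _ ((hasDerivAt_id t).prodMk (hasDerivAt_const t r))).deriv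

lemma pdrr_eq (hψ : ContDiff ℝ 2 (fun p : ℝ × ℝ => ψ p.1 p.2)) (t r : ℝ) :
    pdr (pdr ψ) t r
      = fderiv ℝ (fderiv ℝ (fun p : ℝ × ℝ => ψ p.1 p.2)) (t, r) (0, 1) (0, 1) := by
  have h : (fun ρ => pdr ψ t ρ)
      = fun ρ => fderiv ℝ (fun p : ℝ × ℝ => ψ p.1 p.2) (t, ρ) (0, 1) :=
    funext fun ρ => pdr_eq hψ t ρ
  show deriv (fun ρ => pdr ψ t ρ) r = _
  rw [h]
  exact (line_deriv2 hψ _ ((hasDerivAt_const r t).prodMk (hasDerivAt_id r))).deriv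

lemma Hnull1 (hψ : ContDiff ℝ 2 (fun p : ℝ × ℝ => ψ p.1 p.2))
    (hwave : ∀ t r : ℝ, 0 ≤ t → 0 ≤ r → pdt (pdt ψ) t r = pdr (pdr ψ) t r)
    {t r : ℝ} (ht : 0 ≤ t) (hr : 0 ≤ r) :
    fderiv ℝ (fderiv ℝ (fun p : ℝ × ℝ => ψ p.1 p.2)) (t, r) (-1, 1) (1, 1) = 0 := by
  have e1 : ((-1:ℝ), (1:ℝ)) = -((1:ℝ), (0:ℝ)) + ((0:ℝ), (1:ℝ)) := by simp
  have e2 : ((1:ℝ), (1:ℝ)) = ((1:ℝ), (0:ℝ)) + ((0:ℝ), (1:ℝ)) := by simp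
  have hw := hwave t r ht hr
  rw [pdtt_eq hψ, pdrr_eq hψ] at hw
  have hs := symmH hψ (t, r) ((1:ℝ), (0:ℝ)) ((0:ℝ), (1:ℝ))
  rw [e1, e2]
  simp only [map_add, map_neg, ContinuousLinearMap.add_apply, ContinuousLinearMap.neg_apply]
  linarith

lemma Hnull2 (hψ : ContDiff ℝ 2 (fun p : ℝ × ℝ => ψ p.1 p.2))
    (hwave : ∀ t r : ℝ, 0 ≤ t → 0 ≤ r → pdt (pdt ψ) t r = pdr (pdr ψ) t r)
    {t r : ℝ} (ht : 0 ≤ t) (hr : 0 ≤ r) :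
    fderiv ℝ (fderiv ℝ (fun p : ℝ × ℝ => ψ p.1 p.2)) (t, r) (-1, -1) (1, -1) = 0 := by
  have e1 : ((-1:ℝ), (-1:ℝ)) = -((1:ℝ), (0:ℝ)) - ((0:ℝ), (1:ℝ)) := by simp
  have e2 : ((1:ℝ), (-1:ℝ)) = ((1:ℝ), (0:ℝ)) - ((0:ℝ), (1:ℝ)) := by simp
  have hw := hwave t r ht hr
  rw [pdtt_eq hψ, pdrr_eq hψ] at hw
  have hs := symmH hψ (t, r) ((1:ℝ), (0:ℝ)) ((0:ℝ), (1:ℝ))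
  rw [e1, e2]
  simp only [map_sub, map_neg, ContinuousLinearMap.sub_apply, ContinuousLinearMap.neg_apply]
  linarith

end Wave
section Transport

variable {ψ : ℝ → ℝ → ℝ} {F G : ℝ → ℝ}

lemma pdv_transport (hψ : ContDiff ℝ 2 (fun p : ℝ × ℝ => ψ p.1 p.2))
    (hwave : ∀ t r : ℝ, 0 ≤ t → 0 ≤ r → pdt (pdt ψ) t r = pdr (pdr ψ) t r)
    {t r : ℝ} (ht : 0 ≤ t) (hr : 0 ≤ r) :
    fderiv ℝ (fun p : ℝ × ℝ => ψ p.1 p.2) (t, r) (1, 1)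
      = fderiv ℝ (fun p : ℝ × ℝ => ψ p.1 p.2) (0, t + r) (1, 1) := by
  have key := const_Icc (a := 0) (b := t) ht
    (f := fun s => fderiv ℝ (fun p : ℝ × ℝ => ψ p.1 p.2) (t - s, r + s) (1, 1))
    (f' := fun s => fderiv ℝ (fderiv ℝ (fun p : ℝ × ℝ => ψ p.1 p.2)) (t - s, r + s) (-1, 1) (1, 1))
    (fun s _ => line_deriv2 hψ _
      (((hasDerivAt_id s).const_sub t).prodMk ((hasDerivAt_id s).const_add r)))
    (fun s hs => Hnull1 hψ hwave (by simp at hs ⊢; linarith [hs.1, hs.2])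
      (by simp at hs ⊢; linarith [hs.1, hs.2]))
  simp only [sub_self, sub_zero, add_zero] at key
  rw [← key, add_comm]

lemma pdu_transportA (hψ : ContDiff ℝ 2 (fun p : ℝ × ℝ => ψ p.1 p.2))
    (hwave : ∀ t r : ℝ, 0 ≤ t → 0 ≤ r → pdt (pdt ψ) t r = pdr (pdr ψ) t r)
    {t r : ℝ} (ht : 0 ≤ t) (htr : t ≤ r) :
    fderiv ℝ (fun p : ℝ × ℝ => ψ p.1 p.2) (t, r) (1, -1)
      = fderiv ℝ (fun p : ℝ × ℝ => ψ p.1 p.2) (0, r - t) (1, -1) := by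
  have key := const_Icc (a := 0) (b := t) ht
    (f := fun s => fderiv ℝ (fun p : ℝ × ℝ => ψ p.1 p.2) (t - s, r - s) (1, -1))
    (f' := fun s => fderiv ℝ (fderiv ℝ (fun p : ℝ × ℝ => ψ p.1 p.2)) (t - s, r - s) (-1, -1) (1, -1))
    (fun s _ => line_deriv2 hψ _
      (((hasDerivAt_id s).const_sub t).prodMk ((hasDerivAt_id s).const_sub r)))
    (fun s hs => Hnull2 hψ hwave (by simp at hs ⊢; linarith [hs.1, hs.2])
      (by simp at hs ⊢; linarith [hs.1, hs.2]))
  simp only [sub_self, sub_zero] at key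
  exact key.symm

lemma pdu_transportB (hψ : ContDiff ℝ 2 (fun p : ℝ × ℝ => ψ p.1 p.2))
    (hwave : ∀ t r : ℝ, 0 ≤ t → 0 ≤ r → pdt (pdt ψ) t r = pdr (pdr ψ) t r)
    {t r : ℝ} (hr : 0 ≤ r) (hrt : r ≤ t) :
    fderiv ℝ (fun p : ℝ × ℝ => ψ p.1 p.2) (t, r) (1, -1)
      = fderiv ℝ (fun p : ℝ × ℝ => ψ p.1 p.2) (t - r, 0) (1, -1) := by
  have key := const_Icc (a := 0) (b := r) hr
    (f := fun s => fderiv ℝ (fun p : ℝ × ℝ => ψ p.1 p.2) (t - s, r - s) (1, -1))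
    (f' := fun s => fderiv ℝ (fderiv ℝ (fun p : ℝ × ℝ => ψ p.1 p.2)) (t - s, r - s) (-1, -1) (1, -1))
    (fun s _ => line_deriv2 hψ _
      (((hasDerivAt_id s).const_sub t).prodMk ((hasDerivAt_id s).const_sub r)))
    (fun s hs => Hnull2 hψ hwave (by simp at hs ⊢; linarith [hs.1, hs.2])
      (by simp at hs ⊢; linarith [hs.1, hs.2]))
  simp only [sub_self, sub_zero] at key
  exact key.symm

lemma pdt_boundary (hbd : ∀ t : ℝ, 0 ≤ t → ψ t 0 = 0) {τ : ℝ} (hτ : 0 < τ) :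
    pdt ψ τ 0 = 0 := by
  have h : (fun s => ψ s 0) =ᶠ[nhds τ] (fun _ => (0:ℝ)) := by
    filter_upwards [isOpen_Ioi.mem_nhds (show τ ∈ Ioi (0:ℝ) from hτ)] with s hs
    exact hbd s (le_of_lt hs)
  show deriv (fun s => ψ s 0) τ = 0
  rw [h.deriv_eq]
  simp

lemma eq_on_nonneg_of_eq_on_pos {u v : ℝ → ℝ} (hu : Continuous u) (hv : Continuous v)
    (h : ∀ ρ : ℝ, 0 < ρ → u ρ = v ρ) : ∀ ρ : ℝ, 0 ≤ ρ → u ρ = v ρ := by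
  intro ρ hρ
  rcases hρ.lt_or_eq with h' | h'
  · exact h ρ h'
  · subst h'
    have h1 : Filter.Tendsto u (nhdsWithin 0 (Ioi 0)) (nhds (u 0)) :=
      (hu.tendsto 0).mono_left nhdsWithin_le_nhds
    have h2 : Filter.Tendsto v (nhdsWithin 0 (Ioi 0)) (nhds (v 0)) :=
      (hv.tendsto 0).mono_left nhdsWithin_le_nhds
    have h3 : Filter.Tendsto u (nhdsWithin 0 (Ioi 0)) (nhds (v 0)) := by
      apply h2.congr'
      filter_upwards [self_mem_nhdsWithin] with x hx
      exact (h x hx).symm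
    exact tendsto_nhds_unique h1 h3

lemma cont_fderiv_apply (hψ : ContDiff ℝ 2 (fun p : ℝ × ℝ => ψ p.1 p.2)) (w : ℝ × ℝ) :
    Continuous (fun ρ : ℝ => fderiv ℝ (fun p : ℝ × ℝ => ψ p.1 p.2) (0, ρ) w) :=
  (((hψ.continuous_fderiv two_ne_zero).comp
    (continuous_const.prodMk continuous_id)).clm_apply continuous_const)

/-- Identification of the null derivatives on the initial slice with the data. -/
lemma data_id (hψ : ContDiff ℝ 2 (fun p : ℝ × ℝ => ψ p.1 p.2))
    (hFc : ContDiff ℝ 2 F) (hGc : ContDiff ℝ 1 G)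
    (hd0 : ∀ r : ℝ, 0 ≤ r → ψ 0 r = F r) (hd1 : ∀ r : ℝ, 0 ≤ r → pdt ψ 0 r = G r) :
    (∀ ρ : ℝ, 0 ≤ ρ →
      fderiv ℝ (fun p : ℝ × ℝ => ψ p.1 p.2) (0, ρ) (1, 1) = G ρ + deriv F ρ) ∧
    (∀ ρ : ℝ, 0 ≤ ρ →
      fderiv ℝ (fun p : ℝ × ℝ => ψ p.1 p.2) (0, ρ) (1, -1) = G ρ - deriv F ρ) := by
  have hpdr : ∀ ρ : ℝ, 0 < ρ → pdr ψ 0 ρ = deriv F ρ := by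
    intro ρ hρ
    show deriv (fun x => ψ 0 x) ρ = deriv F ρ
    apply Filter.EventuallyEq.deriv_eq
    filter_upwards [isOpen_Ioi.mem_nhds (show ρ ∈ Ioi (0:ℝ) from hρ)] with x hx
    exact hd0 x (le_of_lt hx)
  constructor
  · apply eq_on_nonneg_of_eq_on_pos (cont_fderiv_apply hψ _)
      (hGc.continuous.add (hFc.continuous_deriv one_le_two))
    intro ρ hρ
    rw [← pdv_eq hψ]
    show pdt ψ 0 ρ + pdr ψ 0 ρ = _
    rw [hd1 ρ hρ.le, hpdr ρ hρ]
    rfl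
  · apply eq_on_nonneg_of_eq_on_pos (cont_fderiv_apply hψ _)
      (hGc.continuous.sub (hFc.continuous_deriv one_le_two))
    intro ρ hρ
    rw [← pdu_eq hψ, hd1 ρ hρ.le, hpdr ρ hρ]
    rfl

end Transport
section Formulas

variable {ψ : ℝ → ℝ → ℝ} {w wh : ℝ → ℝ}

lemma fpdv (hψ : ContDiff ℝ 2 (fun p : ℝ × ℝ => ψ p.1 p.2))
    (hwave : ∀ t r : ℝ, 0 ≤ t → 0 ≤ r → pdt (pdt ψ) t r = pdr (pdr ψ) t r)
    (hw : ∀ ρ : ℝ, 0 ≤ ρ → fderiv ℝ (fun p : ℝ × ℝ => ψ p.1 p.2) (0, ρ) (1, 1) = w ρ)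
    {t r : ℝ} (ht : 0 ≤ t) (hr : 0 ≤ r) :
    pdt ψ t r + pdr ψ t r = w (t + r) := by
  have h := pdv_eq hψ t r
  rw [pdv] at h
  rw [h, pdv_transport hψ hwave ht hr, hw _ (by linarith)]

lemma fpduA (hψ : ContDiff ℝ 2 (fun p : ℝ × ℝ => ψ p.1 p.2))
    (hwave : ∀ t r : ℝ, 0 ≤ t → 0 ≤ r → pdt (pdt ψ) t r = pdr (pdr ψ) t r)
    (hwh : ∀ ρ : ℝ, 0 ≤ ρ → fderiv ℝ (fun p : ℝ × ℝ => ψ p.1 p.2) (0, ρ) (1, -1) = wh ρ)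
    {t r : ℝ} (ht : 0 ≤ t) (htr : t ≤ r) :
    pdt ψ t r - pdr ψ t r = wh (r - t) := by
  rw [pdu_eq hψ, pdu_transportA hψ hwave ht htr, hwh _ (by linarith)]

lemma fpduB (hψ : ContDiff ℝ 2 (fun p : ℝ × ℝ => ψ p.1 p.2))
    (hwave : ∀ t r : ℝ, 0 ≤ t → 0 ≤ r → pdt (pdt ψ) t r = pdr (pdr ψ) t r)
    (hbd : ∀ t : ℝ, 0 ≤ t → ψ t 0 = 0)
    (hw : ∀ ρ : ℝ, 0 ≤ ρ → fderiv ℝ (fun p : ℝ × ℝ => ψ p.1 p.2) (0, ρ) (1, 1) = w ρ)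
    {t r : ℝ} (hr : 0 ≤ r) (hrt : r < t) :
    pdt ψ t r - pdr ψ t r = - w (t - r) := by
  rw [pdu_eq hψ, pdu_transportB hψ hwave hr hrt.le, ← pdu_eq hψ]
  have htr0 : (0:ℝ) < t - r := by linarith
  have hb : pdt ψ (t - r) 0 = 0 := pdt_boundary hbd htr0
  have hv : pdt ψ (t - r) 0 + pdr ψ (t - r) 0 = w (t - r) := by
    have h := pdv_eq hψ (t - r) 0
    rw [pdv] at h
    rw [h, pdv_transport hψ hwave htr0.le le_rfl, add_zero] at *
    exact hw _ htr0.le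
  rw [hb] at hv ⊢
  linarith

lemma fpdt (hψ : ContDiff ℝ 2 (fun p : ℝ × ℝ => ψ p.1 p.2))
    (hwave : ∀ t r : ℝ, 0 ≤ t → 0 ≤ r → pdt (pdt ψ) t r = pdr (pdr ψ) t r)
    (hbd : ∀ t : ℝ, 0 ≤ t → ψ t 0 = 0)
    (hw : ∀ ρ : ℝ, 0 ≤ ρ → fderiv ℝ (fun p : ℝ × ℝ => ψ p.1 p.2) (0, ρ) (1, 1) = w ρ)
    (hwh : ∀ ρ : ℝ, 0 ≤ ρ → fderiv ℝ (fun p : ℝ × ℝ => ψ p.1 p.2) (0, ρ) (1, -1) = wh ρ)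
    {t r : ℝ} (ht : 0 ≤ t) (hr : 0 ≤ r) :
    (t ≤ r → pdt ψ t r = (w (t + r) + wh (r - t)) / 2 ∧
      pdr ψ t r = (w (t + r) - wh (r - t)) / 2) ∧
    (r < t → pdt ψ t r = (w (t + r) - w (t - r)) / 2 ∧
      pdr ψ t r = (w (t + r) + w (t - r)) / 2) := by
  have h1 := fpdv hψ hwave hw ht hr
  constructor
  · intro htr
    have h2 := fpduA hψ hwave hwh ht htr
    constructor <;> linarith
  · intro hrt
    have h2 := fpduB hψ hwave hbd hw hr hrt
    constructor <;> linarith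

end Formulas
section Master

variable {ψ : ℝ → ℝ → ℝ} {w wh F : ℝ → ℝ} {M K A MF : ℝ}

lemma abs_sub_le'' (a b : ℝ) : |a - b| ≤ |a| + |b| := by
  rw [sub_eq_add_neg]
  simpa using abs_add_le a (-b)

lemma wave_est (hψ : ContDiff ℝ 2 (fun p : ℝ × ℝ => ψ p.1 p.2))
    (hwave : ∀ t r : ℝ, 0 ≤ t → 0 ≤ r → pdt (pdt ψ) t r = pdr (pdr ψ) t r)
    (hbd : ∀ t : ℝ, 0 ≤ t → ψ t 0 = 0)
    (hw : ∀ ρ : ℝ, 0 ≤ ρ → fderiv ℝ (fun p : ℝ × ℝ => ψ p.1 p.2) (0, ρ) (1, 1) = w ρ)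
    (hwh : ∀ ρ : ℝ, 0 ≤ ρ → fderiv ℝ (fun p : ℝ × ℝ => ψ p.1 p.2) (0, ρ) (1, -1) = wh ρ)
    (hd0 : ∀ r : ℝ, 0 ≤ r → ψ 0 r = F r)
    (hM0 : 0 ≤ M) (hK0 : 0 ≤ K) (hA0 : 0 ≤ A) (hMF0 : 0 ≤ MF)
    (hMw : ∀ ρ : ℝ, 0 ≤ ρ → |w ρ| ≤ M) (hMwh : ∀ ρ : ℝ, 0 ≤ ρ → |wh ρ| ≤ M)
    (hKwh : ∀ x y : ℝ, 0 ≤ x → 0 ≤ y → |wh x - wh y| ≤ K * |x - y|)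
    (hKww : ∀ x y : ℝ, 0 ≤ x → 0 ≤ y → |w x - w y| ≤ K * |x - y|)
    (hAq : ∀ ρ : ℝ, 0 ≤ ρ → |w ρ + wh ρ| ≤ A * ρ)
    (hw1 : ∀ ρ : ℝ, 1 ≤ ρ → w ρ = 0) (hwh1 : ∀ ρ : ℝ, 1 ≤ ρ → wh ρ = 0)
    (hF1 : ∀ ρ : ℝ, 1 ≤ ρ → F ρ = 0) (hMF : ∀ ρ : ℝ, 0 ≤ ρ → |F ρ| ≤ MF) :
    ∀ t r : ℝ, 0 ≤ t → 0 ≤ r →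
      (|pdt ψ t r + pdr ψ t r| ≤ M) ∧ (1 ≤ t + r → pdt ψ t r + pdr ψ t r = 0) ∧
      (|pdt ψ t r| ≤ M) ∧ (|pdt ψ t r| ≤ (A + K) * r) ∧ (1 ≤ |t - r| → pdt ψ t r = 0) ∧
      (|ψ t r| ≤ M * r) ∧ (|ψ t r| ≤ M + MF) ∧ (1 ≤ |t - r| → ψ t r = 0) := by
  intro t r ht hr
  -- the two representation formulas
  have hfA : ∀ t' r' : ℝ, 0 ≤ t' → 0 ≤ r' → t' ≤ r' →
      pdt ψ t' r' = (w (t' + r') + wh (r' - t')) / 2 ∧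
      pdr ψ t' r' = (w (t' + r') - wh (r' - t')) / 2 :=
    fun t' r' ht' hr' h => (fpdt hψ hwave hbd hw hwh ht' hr').1 h
  have hfB : ∀ t' r' : ℝ, 0 ≤ t' → 0 ≤ r' → r' < t' →
      pdt ψ t' r' = (w (t' + r') - w (t' - r')) / 2 ∧
      pdr ψ t' r' = (w (t' + r') + w (t' - r')) / 2 :=
    fun t' r' ht' hr' h => (fpdt hψ hwave hbd hw hwh ht' hr').2 h
  have hpdrM : ∀ ρ : ℝ, 0 ≤ ρ → |pdr ψ t ρ| ≤ M := by
    intro ρ hρ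
    rcases le_or_gt t ρ with h | h
    · rw [(hfA t ρ ht hρ h).2, abs_div, abs_two]
      have h1 := hMw (t + ρ) (by linarith)
      have h2 := hMwh (ρ - t) (by linarith)
      have h3 := abs_sub_le'' (w (t + ρ)) (wh (ρ - t))
      linarith
    · rw [(hfB t ρ ht hρ h).2, abs_div, abs_two]
      have h1 := hMw (t + ρ) (by linarith)
      have h2 := hMw (t - ρ) (by linarith)
      have h3 := abs_add_le (w (t + ρ)) (w (t - ρ))
      linarith
  have hDr : ∀ ρ : ℝ, HasDerivAt (fun x => ψ t x) (pdr ψ t ρ) ρ := by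
    intro ρ
    have h := hasDerivAt_slice_r hψ t ρ
    rwa [← pdr_eq hψ t ρ] at h
  -- outgoing characteristic derivative, for the case t < r
  have hout : ∀ q s : ℝ, 0 ≤ q → 0 ≤ s →
      HasDerivAt (fun x => ψ x (q + x)) (w (s + (q + s))) s := by
    intro q s hq hs
    have h := line_deriv hψ (c := fun x => (x, q + x)) (v := ((1:ℝ), (1:ℝ))) (s := s)
      ((hasDerivAt_id s).prodMk ((hasDerivAt_id s).const_add q))
    rw [pdv_transport hψ hwave hs (by linarith), hw _ (by linarith)] at h
    exact h
  -- vanishing for 1 ≤ t - r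
  have hzA : 1 ≤ t - r → ψ t r = 0 := by
    intro h1
    have key := const_Icc (a := 0) (b := r) hr (f := fun x => ψ t x) (f' := pdr ψ t)
      (fun ρ _ => hDr ρ)
      (fun ρ hρ => by
        have hρ0 : 0 ≤ ρ := hρ.1
        have hρr : ρ ≤ r := hρ.2
        have hlt : ρ < t := by linarith
        rw [(hfB t ρ ht hρ0 hlt).2, hw1 (t + ρ) (by linarith), hw1 (t - ρ) (by linarith)]
        norm_num)
    have key' : ψ t r = ψ t 0 := key
    rw [key', hbd t ht]
  -- vanishing for 1 ≤ r - t
  have hzB : 1 ≤ r - t → ψ t r = 0 := by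
    intro h1
    have hq : 0 ≤ r - t := by linarith
    have key := const_Icc (a := 0) (b := t) ht (f := fun x => ψ x ((r - t) + x))
      (f' := fun s => w (s + ((r - t) + s)))
      (fun s hs => hout (r - t) s hq hs.1)
      (fun s hs => hw1 _ (by linarith [hs.1]))
    have key' : ψ t ((r - t) + t) = ψ 0 ((r - t) + 0) := key
    rw [show (r - t) + t = r by ring, show (r - t) + 0 = r - t by ring] at key'
    rw [key', hd0 _ hq, hF1 _ (by linarith)]
  refine ⟨?_, ?_, ?_, ?_, ?_, ?_, ?_, ?_⟩
  · rw [fpdv hψ hwave hw ht hr]; exact hMw _ (by linarith)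
  · intro h1; rw [fpdv hψ hwave hw ht hr]; exact hw1 _ (by linarith)
  · rcases le_or_gt t r with h | h
    · rw [(hfA t r ht hr h).1, abs_div, abs_two]
      have h1 := hMw (t + r) (by linarith)
      have h2 := hMwh (r - t) (by linarith)
      have h3 := abs_add_le (w (t + r)) (wh (r - t))
      linarith
    · rw [(hfB t r ht hr h).1, abs_div, abs_two]
      have h1 := hMw (t + r) (by linarith)
      have h2 := hMw (t - r) (by linarith)
      have h3 := abs_sub_le'' (w (t + r)) (w (t - r))
      linarith
  · rcases le_or_gt t r with h | h
    · rw [(hfA t r ht hr h).1, abs_div, abs_two]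
      have key : w (t + r) + wh (r - t)
          = (w (t + r) + wh (t + r)) - (wh (t + r) - wh (r - t)) := by ring
      rw [key]
      have h1 := hAq (t + r) (by linarith)
      have h2 := hKwh (t + r) (r - t) (by linarith) (by linarith)
      have h3 : |(t + r) - (r - t)| = 2 * t := by
        rw [show (t + r) - (r - t) = 2 * t by ring, abs_of_nonneg (by linarith)]
      rw [h3] at h2
      have h4 := abs_sub_le'' (w (t + r) + wh (t + r)) (wh (t + r) - wh (r - t))
      nlinarith [mul_le_mul_of_nonneg_left (show t + r ≤ 2 * r by linarith) hA0,
        mul_le_mul_of_nonneg_left (show 2 * t ≤ 2 * r by linarith) hK0]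
    · rw [(hfB t r ht hr h).1, abs_div, abs_two]
      have h2 := hKww (t + r) (t - r) (by linarith) (by linarith)
      have h3 : |(t + r) - (t - r)| = 2 * r := by
        rw [show (t + r) - (t - r) = 2 * r by ring, abs_of_nonneg (by linarith)]
      rw [h3] at h2
      nlinarith [mul_le_mul_of_nonneg_left hr hA0]
  · intro h1
    rcases le_or_gt t r with h | h
    · have h1' : 1 ≤ r - t := by
        rcases abs_cases (t - r) with ⟨he, _⟩ | ⟨he, _⟩ <;> linarith
      rw [(hfA t r ht hr h).1, hw1 (t + r) (by linarith), hwh1 (r - t) h1']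
      norm_num
    · have h1' : 1 ≤ t - r := by
        rcases abs_cases (t - r) with ⟨he, _⟩ | ⟨he, _⟩ <;> linarith
      rw [(hfB t r ht hr h).1, hw1 (t + r) (by linarith), hw1 (t - r) h1']
      norm_num
  · have key := mvt_Icc (a := 0) (b := r) hr (f := fun x => ψ t x) (f' := pdr ψ t)
      (fun ρ _ => hDr ρ) (fun ρ hρ => hpdrM ρ hρ.1)
    have key' : |ψ t r - ψ t 0| ≤ M * (r - 0) := key
    rw [hbd t ht] at key'
    simpa using key' 
  · rcases le_or_gt t r with h | h
    · -- outgoing representation, t ≤ r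
      set q := r - t with hqdef
      have hq : 0 ≤ q := by linarith
      set σ := max 0 ((1 - q) / 2) with hσdef
      have hσ0 : 0 ≤ σ := le_max_left _ _
      have hσhalf : σ ≤ 1 / 2 := by
        apply max_le (by norm_num)
        linarith
      have hmvt : ∀ b : ℝ, 0 ≤ b → b ≤ σ → |ψ b (q + b) - F q| ≤ M * b := by
        intro b hb0 _
        have key := mvt_Icc (a := 0) (b := b) hb0 (f := fun x => ψ x (q + x))
          (f' := fun s => w (s + (q + s)))
          (fun s hs => hout q s hq hs.1)
          (fun s hs => hMw _ (by linarith [hs.1]))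
        have key' : |ψ b (q + b) - ψ 0 (q + 0)| ≤ M * (b - 0) := key
        rw [add_zero] at key'
        rw [hd0 _ hq] at key'
        simpa using key' 
      rcases le_total σ t with hc | hc
      · have key2 := const_Icc (a := σ) (b := t) hc (f := fun x => ψ x (q + x))
          (f' := fun s => w (s + (q + s)))
          (fun s hs => hout q s hq (by linarith [hs.1]))
          (fun s hs => by
            apply hw1
            have hsσ : σ ≤ s := hs.1
            have : (1 - q) / 2 ≤ σ := le_max_right _ _
            linarith)
        have key2' : ψ t (q + t) = ψ σ (q + σ) := key2
        rw [show q + t = r by rw [hqdef]; ring] at key2'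
        have h5 := hmvt σ hσ0 le_rfl
        have h6 := hMF q hq
        have h7 : M * σ ≤ M * (1 / 2) := mul_le_mul_of_nonneg_left hσhalf hM0
        rw [key2']
        rcases abs_cases (ψ σ (q + σ) - F q) with ⟨he, _⟩ | ⟨he, _⟩ <;>
          rcases abs_cases (F q) with ⟨hf', _⟩ | ⟨hf', _⟩ <;>
          rcases abs_cases (ψ σ (q + σ)) with ⟨hg, _⟩ | ⟨hg, _⟩ <;> linarith
      · have h5 := hmvt t ht hc
        have e1 : q + t = r := by rw [hqdef]; ring
        rw [e1] at h5
        have h6 := hMF q hq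
        have h7 : M * t ≤ M * (1 / 2) := by
          apply mul_le_mul_of_nonneg_left _ hM0
          linarith
        rcases abs_cases (ψ t r - F q) with ⟨he, _⟩ | ⟨he, _⟩ <;>
          rcases abs_cases (F q) with ⟨hf', _⟩ | ⟨hf', _⟩ <;>
          rcases abs_cases (ψ t r) with ⟨hg, _⟩ | ⟨hg, _⟩ <;> linarith
    · -- ingoing, r < t
      rcases le_or_gt 1 (t - r) with hz | hz
      · rw [hzA hz]
        simp [abs_nonneg]
        positivity
      · set ρ0 := max 0 (t - 1) with hρ0def
        have hρ00 : 0 ≤ ρ0 := le_max_left _ _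
        have hρ0r : ρ0 ≤ r := by
          apply max_le hr
          linarith
        have hstep1 : ψ t ρ0 = 0 := by
          rcases le_or_gt ρ0 0 with hc | hc
          · have : ρ0 = 0 := le_antisymm hc hρ00
            rw [this, hbd t ht]
          · have ht1 : 0 < t - 1 := by
              by_contra hcon
              push_neg at hcon
              have : ρ0 = 0 := by
                rw [hρ0def, max_eq_left (by linarith)]
              linarith
            have hρ0eq : ρ0 = t - 1 := by
              rw [hρ0def, max_eq_right (by linarith)]
            have key := const_Icc (a := 0) (b := ρ0) hρ00 (f := fun x => ψ t x)
              (f' := pdr ψ t) (fun ρ _ => hDr ρ)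
              (fun ρ hρ => by
                have hρ0' : 0 ≤ ρ := hρ.1
                have hρρ0 : ρ ≤ ρ0 := hρ.2
                have hlt : ρ < t := by rw [hρ0eq] at hρρ0; linarith
                rw [(hfB t ρ ht hρ0' hlt).2, hw1 (t + ρ) (by linarith),
                  hw1 (t - ρ) (by rw [hρ0eq] at hρρ0; linarith)]
                norm_num)
            have key' : ψ t ρ0 = ψ t 0 := key
            rw [key', hbd t ht]
        have key := mvt_Icc (a := ρ0) (b := r) hρ0r (f := fun x => ψ t x)
          (f' := pdr ψ t) (fun ρ _ => hDr ρ) (fun ρ hρ => hpdrM ρ (by linarith [hρ.1]))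
        have key' : |ψ t r - ψ t ρ0| ≤ M * (r - ρ0) := key
        rw [hstep1, sub_zero] at key'
        have hr1 : r - ρ0 ≤ 1 := by
          rcases le_or_gt t 1 with hc | hc
          · have := le_max_left (0:ℝ) (t - 1)
            linarith
          · have := le_max_right (0:ℝ) (t - 1)
            linarith
        nlinarith [key', mul_le_mul_of_nonneg_left hr1 hM0]
  · intro h1
    rcases le_or_gt r t with h | h
    · apply hzA
      rcases abs_cases (t - r) with ⟨he, _⟩ | ⟨he, _⟩ <;> linarith
    · apply hzB
      rcases abs_cases (t - r) with ⟨he, _⟩ | ⟨he, _⟩ <;> linarith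

end Master
section Data

lemma norm_e1 : ‖EuclideanSpace.single (0 : Fin 3) (1 : ℝ)‖ = 1 := by
  rw [EuclideanSpace.norm_single]; norm_num

lemma norm_smul_e1 (ρ : ℝ) : ‖ρ • EuclideanSpace.single (0 : Fin 3) (1 : ℝ)‖ = |ρ| := by
  rw [norm_smul, norm_e1, mul_one, Real.norm_eq_abs]

lemma curve_contDiff : ContDiff ℝ 2 (fun ρ : ℝ => ρ • EuclideanSpace.single (0 : Fin 3) (1 : ℝ)) :=
  contDiff_id.smul contDiff_const

lemma curve_hasDerivAt (ρ : ℝ) :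
    HasDerivAt (fun ρ : ℝ => ρ • EuclideanSpace.single (0 : Fin 3) (1 : ℝ))
      (EuclideanSpace.single (0 : Fin 3) (1 : ℝ)) ρ := by
  simpa using (hasDerivAt_id ρ).smul_const (EuclideanSpace.single (0 : Fin 3) (1 : ℝ))

variable {φ : E3 → ℝ}

lemma radRep_contDiff {n : ℕ} (hφ : ContDiff ℝ n φ) : ContDiff ℝ n (radRep φ) :=
  hφ.comp (contDiff_id.smul contDiff_const)

lemma radRep_hasDerivAt (hφ : ContDiff ℝ 1 φ) (ρ : ℝ) :
    HasDerivAt (radRep φ)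
      (fderiv ℝ φ (ρ • EuclideanSpace.single (0 : Fin 3) (1 : ℝ))
        (EuclideanSpace.single (0 : Fin 3) (1 : ℝ))) ρ :=
  ((hφ.differentiable one_ne_zero _).hasFDerivAt).comp_hasDerivAt ρ (curve_hasDerivAt ρ)

lemma radRep_deriv2 (hφ : ContDiff ℝ 2 φ) (ρ : ℝ) :
    HasDerivAt (fun ρ : ℝ => fderiv ℝ φ (ρ • EuclideanSpace.single (0 : Fin 3) (1 : ℝ))
        (EuclideanSpace.single (0 : Fin 3) (1 : ℝ)))
      (fderiv ℝ (fderiv ℝ φ) (ρ • EuclideanSpace.single (0 : Fin 3) (1 : ℝ))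
        (EuclideanSpace.single (0 : Fin 3) (1 : ℝ))
        (EuclideanSpace.single (0 : Fin 3) (1 : ℝ))) ρ := by
  have hd : Differentiable ℝ (fderiv ℝ φ) :=
    (hφ.fderiv_right (m := 1) (by norm_num)).differentiable one_ne_zero
  have h := ((hd _).hasFDerivAt).comp_hasDerivAt ρ (curve_hasDerivAt ρ)
  simpa using h.clm_apply
    (hasDerivAt_const ρ (EuclideanSpace.single (0 : Fin 3) (1 : ℝ)))

lemma fderiv_vanish (hφ : ContDiff ℝ 1 φ) (hs : ∀ x : E3, 1 ≤ ‖x‖ → φ x = 0) :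
    ∀ x : E3, 1 ≤ ‖x‖ → fderiv ℝ φ x = 0 := by
  apply ext_zero (hφ.continuous_fderiv one_ne_zero)
  intro x hx
  have h : φ =ᶠ[nhds x] (fun _ => (0:ℝ)) := by
    filter_upwards [(isOpen_lt continuous_const continuous_norm).mem_nhds hx] with y hy
    exact hs y (le_of_lt hy)
  rw [h.fderiv_eq]
  exact fderiv_const_apply 0

lemma fderiv2_vanish (hφ : ContDiff ℝ 2 φ) (hs : ∀ x : E3, 1 ≤ ‖x‖ → φ x = 0) :
    ∀ x : E3, 1 ≤ ‖x‖ → fderiv ℝ (fderiv ℝ φ) x = 0 := by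
  apply ext_zero ((hφ.fderiv_right (by norm_num : (1:WithTop ℕ∞) + 1 ≤ 2)).continuous_fderiv one_ne_zero)
  intro x hx
  have h1 := fderiv_vanish (hφ.of_le one_le_two) hs
  have h : (fderiv ℝ φ) =ᶠ[nhds x] (fun _ => (0 : E3 →L[ℝ] ℝ)) := by
    filter_upwards [(isOpen_lt continuous_const continuous_norm).mem_nhds hx] with y hy
    exact h1 y (le_of_lt hy)
  rw [h.fderiv_eq]
  exact fderiv_const_apply 0

lemma sup_abs_bound (hφ : ContDiff ℝ 1 φ) (hs : ∀ x : E3, 1 ≤ ‖x‖ → φ x = 0) :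
    (∀ y : E3, |φ y| ≤ ⨆ x : E3, |φ x|) ∧ 0 ≤ ⨆ x : E3, |φ x| :=
  le_sup_of_cont hφ.continuous.abs (fun x hx => by rw [hs x hx]; simp)
    (fun x => abs_nonneg _)

lemma sup_fderiv_bound (hφ : ContDiff ℝ 1 φ) (hs : ∀ x : E3, 1 ≤ ‖x‖ → φ x = 0) :
    (∀ y : E3, ‖fderiv ℝ φ y‖ ≤ ⨆ x : E3, ‖fderiv ℝ φ x‖) ∧
      0 ≤ ⨆ x : E3, ‖fderiv ℝ φ x‖ :=
  le_sup_of_cont (hφ.continuous_fderiv one_ne_zero).norm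
    (fun x hx => by rw [fderiv_vanish hφ hs x hx]; simp) (fun x => norm_nonneg _)

lemma sup_fderiv2_bound (hφ : ContDiff ℝ 2 φ) (hs : ∀ x : E3, 1 ≤ ‖x‖ → φ x = 0) :
    (∀ y : E3, ‖fderiv ℝ (fderiv ℝ φ) y‖ ≤ ⨆ x : E3, ‖fderiv ℝ (fderiv ℝ φ) x‖) ∧
      0 ≤ ⨆ x : E3, ‖fderiv ℝ (fderiv ℝ φ) x‖ :=
  le_sup_of_cont
    ((hφ.fderiv_right (by norm_num : (1:WithTop ℕ∞) + 1 ≤ 2)).continuous_fderiv one_ne_zero).norm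
    (fun x hx => by rw [fderiv2_vanish hφ hs x hx]; exact ContinuousLinearMap.opNorm_zero) (fun x => norm_nonneg (fderiv ℝ (fderiv ℝ φ) x))

end Data
section DataMain

lemma data_bounds (φ0 φ1 : E3 → ℝ) (hφ0 : ContDiff ℝ 2 φ0) (hφ1 : ContDiff ℝ 1 φ1)
    (hs0 : ∀ x : E3, 1 ≤ ‖x‖ → φ0 x = 0) (hs1 : ∀ x : E3, 1 ≤ ‖x‖ → φ1 x = 0) :
    ∃ w wh F G : ℝ → ℝ,
      F = (fun ρ : ℝ => ρ * radRep φ0 ρ) ∧ G = (fun ρ : ℝ => ρ * radRep φ1 ρ) ∧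
      w = (fun ρ : ℝ => G ρ + deriv F ρ) ∧ wh = (fun ρ : ℝ => G ρ - deriv F ρ) ∧
      ContDiff ℝ 2 F ∧ ContDiff ℝ 1 G ∧
      0 ≤ W2inf φ0 + W1inf φ1 ∧
      (∀ ρ : ℝ, 0 ≤ ρ → |w ρ| ≤ W2inf φ0 + W1inf φ1) ∧
      (∀ ρ : ℝ, 0 ≤ ρ → |wh ρ| ≤ W2inf φ0 + W1inf φ1) ∧
      (∀ x y : ℝ, 0 ≤ x → 0 ≤ y →
        |w x - w y| ≤ 2 * (W2inf φ0 + W1inf φ1) * |x - y|) ∧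
      (∀ x y : ℝ, 0 ≤ x → 0 ≤ y →
        |wh x - wh y| ≤ 2 * (W2inf φ0 + W1inf φ1) * |x - y|) ∧
      (∀ ρ : ℝ, 0 ≤ ρ → |w ρ + wh ρ| ≤ 2 * (W2inf φ0 + W1inf φ1) * ρ) ∧
      (∀ ρ : ℝ, 1 ≤ ρ → w ρ = 0) ∧ (∀ ρ : ℝ, 1 ≤ ρ → wh ρ = 0) ∧
      (∀ ρ : ℝ, 1 ≤ ρ → F ρ = 0) ∧
      (∀ ρ : ℝ, 0 ≤ ρ → |F ρ| ≤ W2inf φ0 + W1inf φ1) := by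
  classical
  set e1 : E3 := EuclideanSpace.single (0 : Fin 3) (1 : ℝ) with he1
  set F : ℝ → ℝ := fun ρ : ℝ => ρ * radRep φ0 ρ with hFdef
  set G : ℝ → ℝ := fun ρ : ℝ => ρ * radRep φ1 ρ with hGdef
  -- sup constants
  have hS00 := sup_abs_bound (hφ0.of_le one_le_two) hs0
  have hS01 := sup_fderiv_bound (hφ0.of_le one_le_two) hs0
  have hS02 := sup_fderiv2_bound hφ0 hs0
  have hS10 := sup_abs_bound hφ1 hs1
  have hS11 := sup_fderiv_bound hφ1 hs1
  set S00 : ℝ := ⨆ x : E3, |φ0 x|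
  set S01 : ℝ := ⨆ x : E3, ‖fderiv ℝ φ0 x‖
  set S02 : ℝ := ⨆ x : E3, ‖fderiv ℝ (fderiv ℝ φ0) x‖
  set S10 : ℝ := ⨆ x : E3, |φ1 x|
  set S11 : ℝ := ⨆ x : E3, ‖fderiv ℝ φ1 x‖
  have hN0 : W2inf φ0 = S00 + S01 + S02 := rfl
  have hN1 : W1inf φ1 = S10 + S11 := rfl
  set C : ℝ := W2inf φ0 + W1inf φ1 with hCdef
  have hC0 : 0 ≤ C := by
    rw [hCdef, hN0, hN1]
    linarith [hS00.2, hS01.2, hS02.2, hS10.2, hS11.2]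
  -- pointwise derivative data
  set d0 : ℝ → ℝ := fun ρ => fderiv ℝ φ0 (ρ • e1) e1 with hd0def
  set dd0 : ℝ → ℝ := fun ρ => fderiv ℝ (fderiv ℝ φ0) (ρ • e1) e1 e1 with hdd0def
  set d1 : ℝ → ℝ := fun ρ => fderiv ℝ φ1 (ρ • e1) e1 with hd1def
  have hcurve : ∀ ρ : ℝ, ‖ρ • e1‖ = |ρ| := norm_smul_e1
  -- bounds on ingredients
  have hb_f0 : ∀ ρ : ℝ, |radRep φ0 ρ| ≤ S00 := fun ρ => hS00.1 _
  have hb_f1 : ∀ ρ : ℝ, |radRep φ1 ρ| ≤ S10 := fun ρ => hS10.1 _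
  have hb_d0 : ∀ ρ : ℝ, |d0 ρ| ≤ S01 := by
    intro ρ
    have h := (fderiv ℝ φ0 (ρ • e1)).le_opNorm e1
    rw [norm_e1, mul_one] at h
    calc |d0 ρ| = ‖fderiv ℝ φ0 (ρ • e1) e1‖ := (Real.norm_eq_abs _).symm
      _ ≤ ‖fderiv ℝ φ0 (ρ • e1)‖ := h
      _ ≤ S01 := hS01.1 _
  have hb_d1 : ∀ ρ : ℝ, |d1 ρ| ≤ S11 := by
    intro ρ
    have h := (fderiv ℝ φ1 (ρ • e1)).le_opNorm e1
    rw [norm_e1, mul_one] at h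
    calc |d1 ρ| = ‖fderiv ℝ φ1 (ρ • e1) e1‖ := (Real.norm_eq_abs _).symm
      _ ≤ ‖fderiv ℝ φ1 (ρ • e1)‖ := h
      _ ≤ S11 := hS11.1 _
  have hb_dd0 : ∀ ρ : ℝ, |dd0 ρ| ≤ S02 := by
    intro ρ
    have h1 := (fderiv ℝ (fderiv ℝ φ0) (ρ • e1) e1).le_opNorm e1
    have h2 := (fderiv ℝ (fderiv ℝ φ0) (ρ • e1)).le_opNorm e1
    rw [norm_e1, mul_one] at h1 h2
    calc |dd0 ρ| = ‖fderiv ℝ (fderiv ℝ φ0) (ρ • e1) e1 e1‖ := (Real.norm_eq_abs _).symm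
      _ ≤ ‖fderiv ℝ (fderiv ℝ φ0) (ρ • e1) e1‖ := h1
      _ ≤ ‖fderiv ℝ (fderiv ℝ φ0) (ρ • e1)‖ := h2
      _ ≤ S02 := hS02.1 _
  -- vanishing of ingredients for 1 ≤ ρ
  have hz : ∀ ρ : ℝ, 1 ≤ ρ → radRep φ0 ρ = 0 ∧ radRep φ1 ρ = 0 ∧ d0 ρ = 0 ∧
      d1 ρ = 0 ∧ dd0 ρ = 0 := by
    intro ρ hρ
    have hn : 1 ≤ ‖ρ • e1‖ := by rw [hcurve ρ]; rw [abs_of_nonneg (by linarith)]; exact hρ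
    refine ⟨hs0 _ hn, hs1 _ hn, ?_, ?_, ?_⟩
    · rw [hd0def]; simp only
      rw [fderiv_vanish (hφ0.of_le one_le_two) hs0 _ hn]; rfl
    · rw [hd1def]; simp only
      rw [fderiv_vanish hφ1 hs1 _ hn]; rfl
    · rw [hdd0def]; simp only
      rw [fderiv2_vanish hφ0 hs0 _ hn]; rfl
  -- derivatives
  have hf0d : ∀ ρ : ℝ, HasDerivAt (radRep φ0) (d0 ρ) ρ := radRep_hasDerivAt (hφ0.of_le one_le_two)
  have hf1d : ∀ ρ : ℝ, HasDerivAt (radRep φ1) (d1 ρ) ρ := radRep_hasDerivAt hφ1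
  have hFd : ∀ ρ : ℝ, HasDerivAt F (radRep φ0 ρ + ρ * d0 ρ) ρ := by
    intro ρ
    have h := (hasDerivAt_id ρ).mul (hf0d ρ)
    simpa [Pi.mul_def] using h
  have hdF : deriv F = fun ρ => radRep φ0 ρ + ρ * d0 ρ := funext fun ρ => (hFd ρ).deriv
  have hGd : ∀ ρ : ℝ, HasDerivAt G (radRep φ1 ρ + ρ * d1 ρ) ρ := by
    intro ρ
    have h := (hasDerivAt_id ρ).mul (hf1d ρ)
    simpa [Pi.mul_def] using h
  have hFc : ContDiff ℝ 2 F := contDiff_id.mul (radRep_contDiff hφ0)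
  have hGc : ContDiff ℝ 1 G := contDiff_id.mul (radRep_contDiff hφ1)
  -- w and wh and their derivative
  set w : ℝ → ℝ := fun ρ : ℝ => G ρ + deriv F ρ with hwdef
  set wh : ℝ → ℝ := fun ρ : ℝ => G ρ - deriv F ρ with hwhdef
  have hwform : w = fun ρ => G ρ + (radRep φ0 ρ + ρ * d0 ρ) := by rw [hwdef, hdF]
  have hwhform : wh = fun ρ => G ρ - (radRep φ0 ρ + ρ * d0 ρ) := by rw [hwhdef, hdF]
  have hw2 : ∀ ρ : ℝ, w ρ = ρ * radRep φ1 ρ + radRep φ0 ρ + ρ * d0 ρ := by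
    intro ρ; rw [hwform]; rw [hGdef]; ring
  have hwh2 : ∀ ρ : ℝ, wh ρ = ρ * radRep φ1 ρ - radRep φ0 ρ - ρ * d0 ρ := by
    intro ρ; rw [hwhform]; rw [hGdef]; ring
  have hdFd : ∀ ρ : ℝ, HasDerivAt (fun ρ => radRep φ0 ρ + ρ * d0 ρ)
      (d0 ρ + (d0 ρ + ρ * dd0 ρ)) ρ := by
    intro ρ
    have h1 := hf0d ρ
    have h2 := (hasDerivAt_id ρ).mul (radRep_deriv2 hφ0 ρ)
    have h2' : HasDerivAt (fun ρ => ρ * d0 ρ) (d0 ρ + ρ * dd0 ρ) ρ := by simpa [Pi.mul_def] using h2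
    exact h1.add h2'
  have hwD : ∀ ρ : ℝ, HasDerivAt w
      ((radRep φ1 ρ + ρ * d1 ρ) + (d0 ρ + (d0 ρ + ρ * dd0 ρ))) ρ := by
    intro ρ
    rw [hwform]
    exact (hGd ρ).add (hdFd ρ)
  have hwhD : ∀ ρ : ℝ, HasDerivAt wh
      ((radRep φ1 ρ + ρ * d1 ρ) - (d0 ρ + (d0 ρ + ρ * dd0 ρ))) ρ := by
    intro ρ
    rw [hwhform]
    exact (hGd ρ).sub (hdFd ρ)
  -- bound on derivative of w, wh
  have hder_bound : ∀ ρ : ℝ, 0 ≤ ρ →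
      |radRep φ1 ρ + ρ * d1 ρ| + |d0 ρ + (d0 ρ + ρ * dd0 ρ)| ≤ 2 * C := by
    intro ρ hρ
    rcases le_or_gt ρ 1 with h | h
    · have b1 := hb_f1 ρ
      have b2 := hb_d1 ρ
      have b3 := hb_d0 ρ
      have b4 := hb_dd0 ρ
      have e2 : |ρ * d1 ρ| ≤ S11 := by
        rw [abs_mul, abs_of_nonneg hρ]
        calc ρ * |d1 ρ| ≤ 1 * S11 :=
          mul_le_mul h b2 (abs_nonneg _) (by norm_num)
        _ = S11 := one_mul _
      have e4 : |ρ * dd0 ρ| ≤ S02 := by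
        rw [abs_mul, abs_of_nonneg hρ]
        calc ρ * |dd0 ρ| ≤ 1 * S02 :=
          mul_le_mul h b4 (abs_nonneg _) (by norm_num)
        _ = S02 := one_mul _
      have t1 := abs_add_le (radRep φ1 ρ) (ρ * d1 ρ)
      have t2 := abs_add_le (d0 ρ) (d0 ρ + ρ * dd0 ρ)
      have t3 := abs_add_le (d0 ρ) (ρ * dd0 ρ)
      rw [hCdef, hN0, hN1]
      linarith [hS00.2, hS01.2, hS02.2, hS10.2, hS11.2]
    · obtain ⟨z0, z1, z2, z3, z4⟩ := hz ρ h.le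
      rw [z1, z2, z3, z4]
      simp
      linarith
  -- Lipschitz property
  have hLip : ∀ (u : ℝ → ℝ) (u' : ℝ → ℝ), (∀ ρ, HasDerivAt u (u' ρ) ρ) →
      (∀ ρ, 0 ≤ ρ → |u' ρ| ≤ 2 * C) →
      ∀ x y : ℝ, 0 ≤ x → 0 ≤ y → |u x - u y| ≤ 2 * C * |x - y| := by
    intro u u' hu hub x y hx hy
    rcases le_total x y with h | h
    · have key := mvt_Icc (a := x) (b := y) h (f := u) (f' := u')
        (fun s _ => hu s) (fun s hs => hub s (by linarith [hs.1]))
      rw [abs_sub_comm]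
      have h2 : |x - y| = y - x := by
        rw [abs_of_nonpos (by linarith : x - y ≤ 0)]; ring
      rw [h2]
      exact key
    · have key := mvt_Icc (a := y) (b := x) h (f := u) (f' := u')
        (fun s _ => hu s) (fun s hs => hub s (by linarith [hs.1]))
      have h2 : |x - y| = x - y := abs_of_nonneg (by linarith)
      rw [h2]
      exact key
  refine ⟨w, wh, F, G, rfl, rfl, rfl, rfl, hFc, hGc, hC0, ?_, ?_, ?_, ?_, ?_, ?_, ?_, ?_, ?_⟩
  · -- |w| ≤ C
    intro ρ hρ
    rcases le_or_gt ρ 1 with h | h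
    · rw [hw2 ρ]
      have e1' : |ρ * radRep φ1 ρ| ≤ S10 := by
        rw [abs_mul, abs_of_nonneg hρ]
        calc ρ * |radRep φ1 ρ| ≤ 1 * S10 :=
          mul_le_mul h (hb_f1 ρ) (abs_nonneg _) (by norm_num)
        _ = S10 := one_mul _
      have e2' : |ρ * d0 ρ| ≤ S01 := by
        rw [abs_mul, abs_of_nonneg hρ]
        calc ρ * |d0 ρ| ≤ 1 * S01 :=
          mul_le_mul h (hb_d0 ρ) (abs_nonneg _) (by norm_num)
        _ = S01 := one_mul _
      have t1 := abs_add_le (ρ * radRep φ1 ρ + radRep φ0 ρ) (ρ * d0 ρ)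
      have t2 := abs_add_le (ρ * radRep φ1 ρ) (radRep φ0 ρ)
      rw [hCdef, hN0, hN1]
      linarith [hb_f0 ρ, hS02.2, hS11.2]
    · obtain ⟨z0, z1, z2, z3, z4⟩ := hz ρ h.le
      rw [hw2 ρ, z0, z1, z2]
      simpa using hC0
  · -- |wh| ≤ C
    intro ρ hρ
    rcases le_or_gt ρ 1 with h | h
    · rw [hwh2 ρ]
      have e1' : |ρ * radRep φ1 ρ| ≤ S10 := by
        rw [abs_mul, abs_of_nonneg hρ]
        calc ρ * |radRep φ1 ρ| ≤ 1 * S10 :=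
          mul_le_mul h (hb_f1 ρ) (abs_nonneg _) (by norm_num)
        _ = S10 := one_mul _
      have e2' : |ρ * d0 ρ| ≤ S01 := by
        rw [abs_mul, abs_of_nonneg hρ]
        calc ρ * |d0 ρ| ≤ 1 * S01 :=
          mul_le_mul h (hb_d0 ρ) (abs_nonneg _) (by norm_num)
        _ = S01 := one_mul _
      have t1 := abs_sub_le'' (ρ * radRep φ1 ρ - radRep φ0 ρ) (ρ * d0 ρ)
      have t2 := abs_sub_le'' (ρ * radRep φ1 ρ) (radRep φ0 ρ)
      rw [hCdef, hN0, hN1]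
      linarith [hb_f0 ρ, hS02.2, hS11.2]
    · obtain ⟨z0, z1, z2, z3, z4⟩ := hz ρ h.le
      rw [hwh2 ρ, z0, z1, z2]
      simpa using hC0
  · -- Lipschitz w
    apply hLip w _ hwD
    intro ρ hρ
    have h := hder_bound ρ hρ
    have := abs_add_le (radRep φ1 ρ + ρ * d1 ρ) (d0 ρ + (d0 ρ + ρ * dd0 ρ))
    linarith
  · -- Lipschitz wh
    apply hLip wh _ hwhD
    intro ρ hρ
    have h := hder_bound ρ hρ
    have := abs_sub_le'' (radRep φ1 ρ + ρ * d1 ρ) (d0 ρ + (d0 ρ + ρ * dd0 ρ))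
    linarith
  · -- |w + wh| ≤ 2 C ρ
    intro ρ hρ
    have e : w ρ + wh ρ = 2 * (ρ * radRep φ1 ρ) := by
      rw [hw2 ρ, hwh2 ρ]; ring
    rw [e, abs_mul, abs_mul, abs_of_nonneg hρ, abs_of_nonneg (by norm_num : (0:ℝ) ≤ 2)]
    have h1 : |radRep φ1 ρ| ≤ C := by
      rw [hCdef, hN0, hN1]
      linarith [hb_f1 ρ, hS00.2, hS01.2, hS02.2, hS11.2]
    calc 2 * (ρ * |radRep φ1 ρ|) ≤ 2 * (ρ * C) := by
          apply mul_le_mul_of_nonneg_left _ (by norm_num)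
          exact mul_le_mul_of_nonneg_left h1 hρ
      _ = 2 * C * ρ := by ring
  · -- w vanishing
    intro ρ hρ
    obtain ⟨z0, z1, z2, z3, z4⟩ := hz ρ hρ
    rw [hw2 ρ, z0, z1, z2]; ring
  · -- wh vanishing
    intro ρ hρ
    obtain ⟨z0, z1, z2, z3, z4⟩ := hz ρ hρ
    rw [hwh2 ρ, z0, z1, z2]; ring
  · -- F vanishing
    intro ρ hρ
    obtain ⟨z0, _, _, _, _⟩ := hz ρ hρ
    rw [hFdef]; simp only
    rw [z0, mul_zero]
  · -- |F| ≤ C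
    intro ρ hρ
    rcases le_or_gt ρ 1 with h | h
    · rw [hFdef]; simp only
      rw [abs_mul, abs_of_nonneg hρ]
      have : ρ * |radRep φ0 ρ| ≤ 1 * S00 :=
        mul_le_mul h (hb_f0 ρ) (abs_nonneg _) (by norm_num)
      rw [hCdef, hN0, hN1]
      linarith [hS01.2, hS02.2, hS10.2, hS11.2]
    · obtain ⟨z0, _, _, _, _⟩ := hz ρ h.le
      rw [hFdef]; simp only
      rw [z0, mul_zero]
      simpa using hC0

end DataMain
lemma W2inf_nonneg (φ : E3 → ℝ) : 0 ≤ W2inf φ := by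
  unfold W2inf
  have h1 : 0 ≤ ⨆ x : E3, |φ x| := Real.iSup_nonneg fun x => abs_nonneg _
  have h2 : 0 ≤ ⨆ x : E3, ‖fderiv ℝ φ x‖ := Real.iSup_nonneg fun x => norm_nonneg _
  have h3 : 0 ≤ ⨆ x : E3, ‖fderiv ℝ (fderiv ℝ φ) x‖ := Real.iSup_nonneg fun x => norm_nonneg (fderiv ℝ (fderiv ℝ φ) x)
  linarith

lemma W1inf_nonneg (φ : E3 → ℝ) : 0 ≤ W1inf φ := by
  unfold W1inf
  have h1 : 0 ≤ ⨆ x : E3, |φ x| := Real.iSup_nonneg fun x => abs_nonneg _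
  have h2 : 0 ≤ ⨆ x : E3, ‖fderiv ℝ φ x‖ := Real.iSup_nonneg fun x => norm_nonneg _
  linarith

lemma jap_rpow_le_self {x e : ℝ} (he0 : 0 ≤ e) (he1 : e ≤ 1) : jap x ^ e ≤ jap x := by
  calc jap x ^ e ≤ jap x ^ (1:ℝ) := Real.rpow_le_rpow_of_exponent_le (one_le_jap x) he1
    _ = jap x := Real.rpow_one _

lemma jap_rpow_le_two_rpow {x e : ℝ} (he0 : 0 ≤ e) (hx : |x| ≤ 1) : jap x ^ e ≤ 2 ^ e :=
  Real.rpow_le_rpow (jap_pos x).le (by linarith [jap_le_one_add_abs x]) he0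

set_option maxHeartbeats 1000000

/-- Linear estimate for the free radial wave evolution: if `ψ_i` solve the
1+1-dimensional wave equation with boundary condition `ψ_i(t,0) = 0` and data
`ψ_i(0,r) = r φ_i^{(0)}(r)`, `∂_tψ_i(0,r) = r φ_i^{(1)}(r)` coming from radial data
supported in the unit ball, then the `X`-norm of `(ψ₁, ψ₂)` is controlled by the
`W^{2,∞} × W^{1,∞}` norms of the data, with a constant depending only on `q₁, q₂`. -/
theorem stmt_10 (q1 q2 a s1 s2 : ℝ) (hq1 : 1 < q1) (hq1' : q1 < 2) (hq2 : 2 < q2)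
    (hcrit : 1 < q1 * q2 * ((q2 - 2) + q2 * (q1 - 2)))
    (ha : a = q1 - 2) (hs2 : s2 = (q2 - 2) + q2 * (q1 - 2))
    (hs1 : s1 = a + min 0 (q1 * s2 - 1)) :
    ∃ C : ℝ, ∀ φ10 φ20 : E3 → ℝ, ∀ φ11 φ21 : E3 → ℝ, ∀ ψ1 ψ2 : ℝ → ℝ → ℝ,
      ContDiff ℝ 2 φ10 → ContDiff ℝ 2 φ20 → ContDiff ℝ 1 φ11 → ContDiff ℝ 1 φ21 →
      Radial φ10 → Radial φ20 → Radial φ11 → Radial φ21 →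
      (∀ x : E3, 1 ≤ ‖x‖ → φ10 x = 0 ∧ φ20 x = 0 ∧ φ11 x = 0 ∧ φ21 x = 0) →
      ContDiff ℝ 2 (fun p : ℝ × ℝ => ψ1 p.1 p.2) →
      ContDiff ℝ 2 (fun p : ℝ × ℝ => ψ2 p.1 p.2) →
      (∀ t r : ℝ, 0 ≤ t → 0 ≤ r → pdt (pdt ψ1) t r = pdr (pdr ψ1) t r) →
      (∀ t r : ℝ, 0 ≤ t → 0 ≤ r → pdt (pdt ψ2) t r = pdr (pdr ψ2) t r) →
      (∀ t : ℝ, 0 ≤ t → ψ1 t 0 = 0 ∧ ψ2 t 0 = 0) →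
      (∀ r : ℝ, 0 ≤ r → ψ1 0 r = r * radRep φ10 r ∧ ψ2 0 r = r * radRep φ20 r) →
      (∀ r : ℝ, 0 ≤ r → pdt ψ1 0 r = r * radRep φ11 r ∧ pdt ψ2 0 r = r * radRep φ21 r) →
      Xnorm a s1 s2 ψ1 ψ2 ≤ C * (W2inf φ10 + W2inf φ20 + W1inf φ11 + W1inf φ21) := by
  -- exponent facts
  have hs2pos : 0 < s2 := by
    rw [← hs2] at hcrit
    by_contra hcon
    push_neg at hcon
    have hq1q2 : 0 < q1 * q2 := mul_pos (by linarith) (by linarith)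
    nlinarith [mul_nonneg hq1q2.le (neg_nonneg.mpr hcon)]
  have he1a : 0 ≤ 1 + a := by rw [ha]; linarith
  have he1b : 1 + a ≤ 1 := by rw [ha]; linarith
  have hq1s2 : 0 < q1 * s2 := mul_pos (by linarith) hs2pos
  have he2a : 0 ≤ s1 + 1 - a := by
    rw [hs1]
    have : -1 ≤ min 0 (q1 * s2 - 1) := le_min (by norm_num) (by linarith)
    linarith
  have he2b : s1 + 1 - a ≤ 1 := by
    rw [hs1]
    have : min 0 (q1 * s2 - 1) ≤ 0 := min_le_left _ _
    linarith
  set Λ : ℝ := (2:ℝ) ^ (s2 + 1) with hΛdef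
  have hΛ1 : 1 ≤ Λ := by
    rw [hΛdef]
    calc (1:ℝ) = (2:ℝ) ^ (0:ℝ) := (Real.rpow_zero 2).symm
      _ ≤ (2:ℝ) ^ (s2 + 1) := Real.rpow_le_rpow_of_exponent_le one_le_two (by linarith)
  have hΛ2 : (2:ℝ) ^ s2 ≤ Λ := by
    rw [hΛdef]
    exact Real.rpow_le_rpow_of_exponent_le one_le_two (by linarith)
  refine ⟨20 + 6 * Λ, ?_⟩
  intro φ10 φ20 φ11 φ21 ψ1 ψ2 h10c h20c h11c h21c _ _ _ _ hsupp hψ1 hψ2 hwave1 hwave2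
    hbd hdat0 hdat1
  set N : ℝ := W2inf φ10 + W2inf φ20 + W1inf φ11 + W1inf φ21 with hNdef
  have hNnn : 0 ≤ N := by
    rw [hNdef]
    linarith [W2inf_nonneg φ10, W2inf_nonneg φ20, W1inf_nonneg φ11, W1inf_nonneg φ21]
  obtain ⟨w1, wh1, F1, G1, hF1eq, hG1eq, hw1eq, hwh1eq, hF1c, hG1c, hC10, hMw1, hMwh1,
    hLw1, hLwh1, hAq1, hw1z, hwh1z, hF1z, hMF1⟩ :=
    data_bounds φ10 φ11 h10c h11c (fun x hx => (hsupp x hx).1) (fun x hx => (hsupp x hx).2.2.1)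
  obtain ⟨w2, wh2, F2, G2, hF2eq, hG2eq, hw2eq, hwh2eq, hF2c, hG2c, hC20, hMw2, hMwh2,
    hLw2, hLwh2, hAq2, hw2z, hwh2z, hF2z, hMF2⟩ :=
    data_bounds φ20 φ21 h20c h21c (fun x hx => (hsupp x hx).2.1) (fun x hx => (hsupp x hx).2.2.2)
  set C1 : ℝ := W2inf φ10 + W1inf φ11 with hC1def
  set C2 : ℝ := W2inf φ20 + W1inf φ21 with hC2def
  have hC1N : C1 ≤ N := by
    rw [hC1def, hNdef]
    linarith [W2inf_nonneg φ20, W1inf_nonneg φ21]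
  have hC2N : C2 ≤ N := by
    rw [hC2def, hNdef]
    linarith [W2inf_nonneg φ10, W1inf_nonneg φ11]
  have hd01 : ∀ r : ℝ, 0 ≤ r → ψ1 0 r = F1 r := by
    intro r hr; rw [(hdat0 r hr).1, hF1eq]
  have hd11 : ∀ r : ℝ, 0 ≤ r → pdt ψ1 0 r = G1 r := by
    intro r hr; rw [(hdat1 r hr).1, hG1eq]
  have hd02 : ∀ r : ℝ, 0 ≤ r → ψ2 0 r = F2 r := by
    intro r hr; rw [(hdat0 r hr).2, hF2eq]
  have hd12 : ∀ r : ℝ, 0 ≤ r → pdt ψ2 0 r = G2 r := by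
    intro r hr; rw [(hdat1 r hr).2, hG2eq]
  obtain ⟨hid1, hid1'⟩ := data_id hψ1 hF1c hG1c hd01 hd11
  obtain ⟨hid2, hid2'⟩ := data_id hψ2 hF2c hG2c hd02 hd12
  have hw1id : ∀ ρ : ℝ, 0 ≤ ρ →
      fderiv ℝ (fun p : ℝ × ℝ => ψ1 p.1 p.2) (0, ρ) (1, 1) = w1 ρ := by
    intro ρ hρ; rw [hw1eq]; exact hid1 ρ hρ
  have hwh1id : ∀ ρ : ℝ, 0 ≤ ρ →
      fderiv ℝ (fun p : ℝ × ℝ => ψ1 p.1 p.2) (0, ρ) (1, -1) = wh1 ρ := by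
    intro ρ hρ; rw [hwh1eq]; exact hid1' ρ hρ
  have hw2id : ∀ ρ : ℝ, 0 ≤ ρ →
      fderiv ℝ (fun p : ℝ × ℝ => ψ2 p.1 p.2) (0, ρ) (1, 1) = w2 ρ := by
    intro ρ hρ; rw [hw2eq]; exact hid2 ρ hρ
  have hwh2id : ∀ ρ : ℝ, 0 ≤ ρ →
      fderiv ℝ (fun p : ℝ × ℝ => ψ2 p.1 p.2) (0, ρ) (1, -1) = wh2 ρ := by
    intro ρ hρ; rw [hwh2eq]; exact hid2' ρ hρ
  have est1 := wave_est (M := C1) (K := 2 * C1) (A := 2 * C1) (MF := C1)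
    hψ1 hwave1 (fun t ht => (hbd t ht).1) hw1id hwh1id hd01
    hC10 (by linarith) (by linarith) hC10
    hMw1 hMwh1 hLwh1 hLw1 hAq1 hw1z hwh1z hF1z hMF1
  have est2 := wave_est (M := C2) (K := 2 * C2) (A := 2 * C2) (MF := C2)
    hψ2 hwave2 (fun t ht => (hbd t ht).2) hw2id hwh2id hd02
    hC20 (by linarith) (by linarith) hC20
    hMw2 hMwh2 hLwh2 hLw2 hAq2 hw2z hwh2z hF2z hMF2
  haveI : Nonempty {p : ℝ × ℝ // 0 ≤ p.1 ∧ 0 ≤ p.2} :=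
    ⟨⟨(0, 0), le_refl 0, le_refl 0⟩⟩
  have hT1 : (⨆ p : {p : ℝ × ℝ // 0 ≤ p.1 ∧ 0 ≤ p.2},
      |pdt ψ1 p.1.1 p.1.2 / p.1.2| * jap ((p.1.1 + p.1.2) / 2) ^ (1 + a)
        * jap ((p.1.1 - p.1.2) / 2) ^ (s1 + 1 - a)) ≤ 20 * N := by
    apply ciSup_le
    rintro ⟨⟨t, r⟩, htr⟩
    obtain ⟨ht, hr⟩ : 0 ≤ t ∧ 0 ≤ r := htr
    show |pdt ψ1 t r / r| * jap ((t + r) / 2) ^ (1 + a)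
        * jap ((t - r) / 2) ^ (s1 + 1 - a) ≤ 20 * N
    obtain ⟨-, -, hc3, hc4, hc5, -, -, -⟩ := est1 t r ht hr
    rcases eq_or_lt_of_le hr with hr0 | hr0
    · rw [← hr0, div_zero, abs_zero, zero_mul, zero_mul]
      positivity
    rcases le_or_gt 1 |t - r| with hz | hz
    · rw [hc5 hz, zero_div, abs_zero, zero_mul, zero_mul]
      positivity
    have hu : |(t - r) / 2| ≤ 1 := by
      rw [abs_div, abs_of_nonneg (by norm_num : (0:ℝ) ≤ 2)]
      linarith
    have hju : jap ((t - r) / 2) ^ (s1 + 1 - a) ≤ 2 := by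
      calc jap ((t - r) / 2) ^ (s1 + 1 - a) ≤ jap ((t - r) / 2) :=
          jap_rpow_le_self he2a he2b
        _ ≤ 1 + |(t - r) / 2| := jap_le_one_add_abs _
        _ ≤ 2 := by linarith
    have htlt : t < r + 1 := by
      rcases abs_cases (t - r) with ⟨he, _⟩ | ⟨he, _⟩ <;> linarith
    have hjv2 : jap ((t + r) / 2) ≤ 1 + (t + r) / 2 := by
      have h' := jap_le_one_add_abs ((t + r) / 2)
      rw [abs_of_nonneg (by linarith : (0:ℝ) ≤ (t + r) / 2)] at h'
      exact h'
    have habs : |pdt ψ1 t r / r| = |pdt ψ1 t r| / r := by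
      rw [abs_div, abs_of_pos hr0]
    rw [habs]
    rcases le_or_gt r 1 with hrc | hrc
    · have h1 : |pdt ψ1 t r| / r ≤ 4 * N := by
        rw [div_le_iff₀ hr0]
        calc |pdt ψ1 t r| ≤ (2 * C1 + 2 * C1) * r := hc4
          _ ≤ 4 * N * r := by nlinarith
      have h2 : jap ((t + r) / 2) ^ (1 + a) ≤ 5 / 2 := by
        calc jap ((t + r) / 2) ^ (1 + a) ≤ jap ((t + r) / 2) := jap_rpow_le_self he1a he1b
          _ ≤ 1 + (t + r) / 2 := hjv2
          _ ≤ 5 / 2 := by linarith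
      calc |pdt ψ1 t r| / r * jap ((t + r) / 2) ^ (1 + a) * jap ((t - r) / 2) ^ (s1 + 1 - a)
          ≤ (4 * N) * (5 / 2) * 2 := by
            apply mul_le_mul _ hju (Real.rpow_nonneg (jap_pos _).le _) (by positivity)
            exact mul_le_mul h1 h2 (Real.rpow_nonneg (jap_pos _).le _) (by positivity)
        _ = 20 * N := by ring
    · have h1 : |pdt ψ1 t r| / r ≤ N / r := by
        gcongr
        exact le_trans hc3 hC1N
      have h2 : jap ((t + r) / 2) ^ (1 + a) ≤ 5 / 2 * r := by
        calc jap ((t + r) / 2) ^ (1 + a) ≤ jap ((t + r) / 2) := jap_rpow_le_self he1a he1b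
          _ ≤ 1 + (t + r) / 2 := hjv2
          _ ≤ 5 / 2 * r := by linarith
      have hnn1 : 0 ≤ N / r := div_nonneg hNnn hr0.le
      have hnn2 : 0 ≤ N / r * (5 / 2 * r) := mul_nonneg hnn1 (by linarith)
      calc |pdt ψ1 t r| / r * jap ((t + r) / 2) ^ (1 + a) * jap ((t - r) / 2) ^ (s1 + 1 - a)
          ≤ (N / r * (5 / 2 * r)) * 2 := by
            apply mul_le_mul _ hju (Real.rpow_nonneg (jap_pos _).le _) hnn2
            exact mul_le_mul h1 h2 (Real.rpow_nonneg (jap_pos _).le _) hnn1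
        _ = 5 * N := by field_simp
        _ ≤ 20 * N := by linarith
  have hT2 : (⨆ p : {p : ℝ × ℝ // 0 ≤ p.1 ∧ 0 ≤ p.2},
      |ψ2 p.1.1 p.1.2 / p.1.2| * jap ((p.1.1 + p.1.2) / 2)
        * jap ((p.1.1 - p.1.2) / 2) ^ s2) ≤ 5 * Λ * N := by
    apply ciSup_le
    rintro ⟨⟨t, r⟩, htr⟩
    obtain ⟨ht, hr⟩ : 0 ≤ t ∧ 0 ≤ r := htr
    show |ψ2 t r / r| * jap ((t + r) / 2) * jap ((t - r) / 2) ^ s2 ≤ 5 * Λ * N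
    have h5ΛN : 0 ≤ 5 * Λ * N := by nlinarith
    obtain ⟨-, -, -, -, -, hc6, hc7, hc8⟩ := est2 t r ht hr
    rcases eq_or_lt_of_le hr with hr0 | hr0
    · rw [← hr0, div_zero, abs_zero, zero_mul, zero_mul]
      exact h5ΛN
    rcases le_or_gt 1 |t - r| with hz | hz
    · rw [hc8 hz, zero_div, abs_zero, zero_mul, zero_mul]
      exact h5ΛN
    have hu : |(t - r) / 2| ≤ 1 := by
      rw [abs_div, abs_of_nonneg (by norm_num : (0:ℝ) ≤ 2)]
      linarith
    have hju : jap ((t - r) / 2) ^ s2 ≤ Λ :=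
      le_trans (jap_rpow_le_two_rpow hs2pos.le hu) hΛ2
    have htlt : t < r + 1 := by
      rcases abs_cases (t - r) with ⟨he, _⟩ | ⟨he, _⟩ <;> linarith
    have hjv2 : jap ((t + r) / 2) ≤ 1 + (t + r) / 2 := by
      have h' := jap_le_one_add_abs ((t + r) / 2)
      rw [abs_of_nonneg (by linarith : (0:ℝ) ≤ (t + r) / 2)] at h'
      exact h'
    have habs : |ψ2 t r / r| = |ψ2 t r| / r := by
      rw [abs_div, abs_of_pos hr0]
    rw [habs]
    rcases le_or_gt r 1 with hrc | hrc
    · have h1 : |ψ2 t r| / r ≤ N := by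
        rw [div_le_iff₀ hr0]
        calc |ψ2 t r| ≤ C2 * r := hc6
          _ ≤ N * r := by nlinarith
      have h2 : jap ((t + r) / 2) ≤ 5 / 2 := by
        calc jap ((t + r) / 2) ≤ 1 + (t + r) / 2 := hjv2
          _ ≤ 5 / 2 := by linarith
      have hnn1 : 0 ≤ N * (5 / 2) := by linarith
      calc |ψ2 t r| / r * jap ((t + r) / 2) * jap ((t - r) / 2) ^ s2
          ≤ (N * (5 / 2)) * Λ := by
            apply mul_le_mul _ hju (Real.rpow_nonneg (jap_pos _).le _) hnn1
            exact mul_le_mul h1 h2 (jap_pos _).le hNnn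
        _ ≤ 5 * Λ * N := by nlinarith
    · have h1 : |ψ2 t r| / r ≤ 2 * N / r := by
        gcongr
        calc |ψ2 t r| ≤ C2 + C2 := hc7
          _ ≤ 2 * N := by linarith
      have h2 : jap ((t + r) / 2) ≤ 5 / 2 * r := by
        calc jap ((t + r) / 2) ≤ 1 + (t + r) / 2 := hjv2
          _ ≤ 5 / 2 * r := by linarith
      have hnn1 : 0 ≤ 2 * N / r := div_nonneg (by linarith) hr0.le
      have hnn2 : 0 ≤ 2 * N / r * (5 / 2 * r) := mul_nonneg hnn1 (by linarith)
      calc |ψ2 t r| / r * jap ((t + r) / 2) * jap ((t - r) / 2) ^ s2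
          ≤ (2 * N / r * (5 / 2 * r)) * Λ := by
            apply mul_le_mul _ hju (Real.rpow_nonneg (jap_pos _).le _) hnn2
            exact mul_le_mul h1 h2 (jap_pos _).le hnn1
        _ = 5 * N * Λ := by field_simp
        _ = 5 * Λ * N := by ring
  have hT3 : (⨆ p : {p : ℝ × ℝ // 0 ≤ p.1 ∧ 0 ≤ p.2},
      |pdv ψ2 p.1.1 p.1.2| * jap ((p.1.1 + p.1.2) / 2) ^ (s2 + 1)) ≤ Λ * N := by
    apply ciSup_le
    rintro ⟨⟨t, r⟩, htr⟩
    obtain ⟨ht, hr⟩ : 0 ≤ t ∧ 0 ≤ r := htr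
    show |pdv ψ2 t r| * jap ((t + r) / 2) ^ (s2 + 1) ≤ Λ * N
    have hΛN : 0 ≤ Λ * N := by nlinarith
    obtain ⟨hc1, hc2, -, -, -, -, -, -⟩ := est2 t r ht hr
    have hpdv : pdv ψ2 t r = pdt ψ2 t r + pdr ψ2 t r := rfl
    rcases le_or_gt 1 (t + r) with hz | hz
    · rw [hpdv, hc2 hz, abs_zero, zero_mul]
      exact hΛN
    · have hu : |(t + r) / 2| ≤ 1 := by
        rw [abs_div, abs_of_nonneg (by norm_num : (0:ℝ) ≤ 2),
          abs_of_nonneg (by linarith : (0:ℝ) ≤ t + r)]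
        linarith
      have hjv : jap ((t + r) / 2) ^ (s2 + 1) ≤ Λ := by
        rw [hΛdef]
        exact jap_rpow_le_two_rpow (by linarith) hu
      calc |pdv ψ2 t r| * jap ((t + r) / 2) ^ (s2 + 1) ≤ N * Λ := by
            apply mul_le_mul _ hjv (Real.rpow_nonneg (jap_pos _).le _) hNnn
            rw [hpdv]
            exact le_trans hc1 hC2N
        _ = Λ * N := by ring
  have hsum := add_le_add (add_le_add hT1 hT2) hT3
  calc Xnorm a s1 s2 ψ1 ψ2 ≤ 20 * N + 5 * Λ * N + Λ * N := hsum
    _ = (20 + 6 * Λ) * N := by ring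

end
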